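/- Let n ≥ 3, ξ ∈ ℝ, η ∈ ℝ^(n−1), and let ρ : S^(n−2) → ℝ be continuous with ρ(Y) > 0 for every Y in the unit sphere S^(n−2) ⊂ ℝ^(n−1). For a unit vector Y ∈ ℝ^(n−1) set c(Y) = (ξ − i)·⟨Y, η⟩/(ξ² + 1) ∈ ℂ, w(Y) = (−c(Y), Y) ∈ ℂⁿ, v(Y) = (0, Y) ∈ ℂⁿ, and P(Y) = Idₙ − w(Y) v(Y)ᵀ. Then for every nonzero complex symmetric n × n matrix f, ∫_{S^(n−2)} ρ(Y) ‖P(Y) f P(Y)ᵀ‖²_F dσ(Y) > 0, where σ is the surface measure on S^(n−2) and ‖M‖²_F = Σ_{i,j} |M_{ij}|². -/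

import Mathlib

open scoped RealInnerProductSpace Matrix Pointwise ENNReal
open MeasureTheory Set Metric


private lemma entry_formula {n : ℕ} (f : Matrix (Fin n) (Fin n) ℂ) (w v : Fin n → ℂ)
    (i j : Fin n) :
    (((1 - Matrix.vecMulVec w v) * f * (1 - Matrix.vecMulVec w v)ᵀ :
        Matrix (Fin n) (Fin n) ℂ)) i j
      = f i j - w i * (∑ k, v k * f k j) - (∑ k, f i k * v k) * w j
        + w i * w j * (∑ k, ∑ l, v k * f k l * v l) := by
  simp only [Matrix.mul_apply, Matrix.transpose_apply, Matrix.sub_apply, Matrix.one_apply,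
    Matrix.vecMulVec_apply, sub_mul, mul_sub, ite_mul, one_mul, zero_mul,
    Finset.sum_sub_distrib, Finset.sum_ite_eq, Finset.mem_univ, if_true]
  rw [Finset.sum_comm]
  simp only [mul_ite, ite_mul, mul_zero, zero_mul, Finset.sum_sub_distrib,
    Finset.sum_ite_eq, Finset.sum_ite_eq', Finset.mem_univ, if_true,
    Finset.mul_sum, Finset.sum_mul]
  ring_nf
  have e2 : (∑ x, f i x * w j * v x) = ∑ x, f i x * v x * w j :=
    Finset.sum_congr rfl fun x _ => by ring
  have e3 : (∑ x : Fin n, ∑ y : Fin n, w i * v y * f y x * w j * v x)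
      = ∑ x : Fin n, ∑ y : Fin n, w i * w j * v y * f y x * v x :=
    Finset.sum_congr rfl fun x _ => Finset.sum_congr rfl fun y _ => by ring
  have e4 : (∑ x, f i x * v x * w j) = ∑ x, w j * f i x * v x :=
    Finset.sum_congr rfl fun x _ => by ring
  linear_combination -e4 - e2

private lemma master {m : ℕ} (f : Matrix (Fin (m+1)) (Fin (m+1)) ℂ) (γ : ℂ) (z : Fin m → ℂ)
    (h : (1 - Matrix.vecMulVec (Fin.cons (-γ) z) (Fin.cons 0 z)) * f *
         (1 - Matrix.vecMulVec (Fin.cons (-γ) z) (Fin.cons 0 z))ᵀ = 0)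
    (i j : Fin (m+1)) :
    f i j - (Fin.cons (-γ) z : Fin (m+1) → ℂ) i * (∑ k, z k * f k.succ j)
      - (∑ k, f i k.succ * z k) * (Fin.cons (-γ) z : Fin (m+1) → ℂ) j
      + (Fin.cons (-γ) z : Fin (m+1) → ℂ) i * (Fin.cons (-γ) z : Fin (m+1) → ℂ) j *
        (∑ k, ∑ l, z k * f k.succ l.succ * z l) = 0 := by
  have E := entry_formula f (Fin.cons (-γ) z) (Fin.cons 0 z) i j
  rw [h] at E
  simp only [Matrix.zero_apply, Fin.sum_univ_succ, Fin.cons_zero, Fin.cons_succ, zero_mul,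
    mul_zero, Finset.sum_const_zero, zero_add, add_zero] at E
  exact E.symm

private lemma key_inj (m : ℕ) (hm : 2 ≤ m) (f : Matrix (Fin (m+1)) (Fin (m+1)) ℂ)
    (hsymm : f.IsSymm)
    (h : ∀ y : Fin m → ℝ, (∑ k, (y k)^2) = 1 → ∃ γ : ℂ,
      (1 - Matrix.vecMulVec (Fin.cons (-γ) fun k => ((y k : ℝ) : ℂ))
          (Fin.cons 0 fun k => ((y k : ℝ) : ℂ))) * f *
      (1 - Matrix.vecMulVec (Fin.cons (-γ) fun k => ((y k : ℝ) : ℂ))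
          (Fin.cons 0 fun k => ((y k : ℝ) : ℂ)))ᵀ = 0) :
    f = 0 := by
  classical
  haveI : Nontrivial (Fin m) := by
    obtain ⟨m, rfl⟩ : ∃ k, m = k + 2 := ⟨m - 2, by omega⟩
    infer_instance
  -- basis vectors
  set e : Fin m → Fin m → ℝ := fun t k => if k = t then 1 else 0 with he
  have hesum : ∀ t, (∑ k, (e t k)^2) = 1 := by
    intro t
    simp [he, apply_ite (· ^ (2:ℕ))]
  have hez : ∀ t, (fun k => ((e t k : ℝ) : ℂ)) = fun k => if k = t then (1:ℂ) else 0 := by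
    intro t; funext k; simp [he, apply_ite Complex.ofReal]
  have hecollapse : ∀ (t : Fin m) (A : Fin m → ℂ),
      (∑ k, (if k = t then (1:ℂ) else 0) * A k) = A t := by
    intro t A; simp [ite_mul]
  -- step 1a : F entries away from t vanish
  have hF1 : ∀ (t a b : Fin m), a ≠ t → b ≠ t → f a.succ b.succ = 0 := by
    intro t a b ha hb
    obtain ⟨γ, hγ⟩ := h (e t) (hesum t)
    rw [hez t] at hγ
    have E := master f γ _ hγ a.succ b.succ
    simp only [Fin.cons_succ, if_neg ha, if_neg hb, zero_mul, mul_zero, sub_zero,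
      add_zero] at E
    exact E
  have hFd : ∀ a : Fin m, f a.succ a.succ = 0 := by
    intro a
    obtain ⟨t, ht⟩ := exists_ne a
    exact hF1 t a a (Ne.symm ht) (Ne.symm ht)
  -- off diagonal, using the vector (e a + e b)/√2
  have hFoff : ∀ a b : Fin m, a ≠ b → f a.succ b.succ = 0 := by
    intro a b hab
    set r : ℂ := (((Real.sqrt 2)⁻¹ : ℝ) : ℂ) with hr
    have hrr : ((Real.sqrt 2)⁻¹)^2 = (2:ℝ)⁻¹ := by
      rw [inv_pow, Real.sq_sqrt (by norm_num : (0:ℝ) ≤ 2)]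
    have hr2 : r ^ 2 = 2⁻¹ := by
      rw [hr, ← Complex.ofReal_pow, hrr]
      push_cast
      norm_num
    set u : Fin m → ℝ := fun k => if k = a then (Real.sqrt 2)⁻¹ else
      if k = b then (Real.sqrt 2)⁻¹ else 0 with hu
    have husum : (∑ k, (u k)^2) = 1 := by
      have hpt : ∀ k, (u k)^2 = (if k = a then ((Real.sqrt 2)⁻¹)^2 else 0)
          + (if k = b then ((Real.sqrt 2)⁻¹)^2 else 0) := by
        intro k
        rcases eq_or_ne k a with rfl | h1
        · simp [hu, hab]
        · rcases eq_or_ne k b with rfl | h2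
          · simp [hu, h1]
          · simp [hu, h1, h2]
      rw [Finset.sum_congr rfl fun k _ => hpt k, Finset.sum_add_distrib]
      simp only [Finset.sum_ite_eq', Finset.mem_univ, if_true]
      rw [inv_pow, Real.sq_sqrt (by norm_num : (0:ℝ) ≤ 2)]
      norm_num
    have huz : (fun k => ((u k : ℝ) : ℂ)) = fun k => if k = a then r else
        if k = b then r else 0 := by
      funext k; by_cases h1 : k = a <;> by_cases h2 : k = b <;> simp [hu, h1, h2, hr]
    have hucollapse : ∀ (A : Fin m → ℂ),
        (∑ k, (if k = a then r else if k = b then r else 0) * A k) = r * A a + r * A b := by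
      intro A
      have hpt : ∀ k, (if k = a then r else if k = b then r else 0) * A k
          = (if k = a then r * A k else 0) + (if k = b then r * A k else 0) := by
        intro k
        rcases eq_or_ne k a with rfl | h1
        · simp [hab]
        · rcases eq_or_ne k b with rfl | h2
          · simp [h1]
          · simp [h1, h2]
      rw [Finset.sum_congr rfl fun k _ => hpt k, Finset.sum_add_distrib]
      simp
    obtain ⟨γ, hγ⟩ := h u husum
    rw [huz] at hγ
    have E := master f γ _ hγ a.succ b.succ
    set z : Fin m → ℂ := fun k => if k = a then r else if k = b then r else 0 with hzdef
    have hza : z a = r := by simp [hzdef]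
    have hzb : z b = r := by simp [hzdef, Ne.symm hab]
    have hSb : (∑ k, z k * f k.succ b.succ) = r * f a.succ b.succ := by
      rw [hucollapse]
      rw [hFd b]; ring
    have hSa : (∑ k, f a.succ k.succ * z k) = r * f a.succ b.succ := by
      rw [Finset.sum_congr rfl fun k _ => mul_comm (f a.succ k.succ) (z k), hucollapse]
      rw [hFd a]; ring
    have hT : (∑ k, ∑ l, z k * f k.succ l.succ * z l) = 2 * r^2 * f a.succ b.succ := by
      have hin : ∀ k : Fin m, (∑ l, z k * f k.succ l.succ * z l)
          = z k * (∑ l, z l * f k.succ l.succ) := by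
        intro k
        rw [Finset.mul_sum]
        exact Finset.sum_congr rfl fun l _ => by ring
      rw [Finset.sum_congr rfl fun k _ => hin k]
      have h2 : ∀ k : Fin m, (∑ l, z l * f k.succ l.succ) = r * f k.succ a.succ + r * f k.succ b.succ :=
        fun k => hucollapse _
      rw [Finset.sum_congr rfl fun k _ => by rw [h2 k], hucollapse]
      rw [hFd a, hFd b, hsymm.apply a.succ b.succ]
      ring
    rw [Fin.cons_succ, Fin.cons_succ, hza, hzb, hSb, hSa, hT] at E
    have goal2 : f a.succ b.succ * (1 - 2*r^2 + 2*r^4) = 0 := by linear_combination E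
    rw [show (1:ℂ) - 2*r^2 + 2*r^4 = 1 - 2*r^2 + 2*(r^2)^2 by ring, hr2] at goal2
    norm_num at goal2
    exact goal2
  have hF : ∀ a b : Fin m, f a.succ b.succ = 0 := by
    intro a b
    by_cases hab : a = b
    · subst hab; exact hFd a
    · exact hFoff a b hab
  -- step 2 : first row (and column) off corner
  have hB : ∀ b : Fin m, f 0 b.succ = 0 := by
    intro b
    obtain ⟨t, ht⟩ := exists_ne b
    obtain ⟨γ, hγ⟩ := h (e t) (hesum t)
    rw [hez t] at hγ
    have E := master f γ _ hγ 0 b.succ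
    simp only [Fin.cons_zero, Fin.cons_succ, if_neg (Ne.symm ht)] at E
    have hS : (∑ k, (if k = t then (1:ℂ) else 0) * f k.succ b.succ) = 0 := by
      rw [hecollapse]; exact hF t b
    have hT : (∑ k, ∑ l, (if k = t then (1:ℂ) else 0) * f k.succ l.succ *
        (if l = t then (1:ℂ) else 0)) = 0 := by
      apply Finset.sum_eq_zero; intro k _
      apply Finset.sum_eq_zero; intro l _
      rw [hF k l]; ring
    rw [hS, hT] at E
    simpa using E
  -- step 3 : corner
  have h00 : f 0 0 = 0 := by
    obtain ⟨t⟩ : Nonempty (Fin m) := inferInstance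
    obtain ⟨γ, hγ⟩ := h (e t) (hesum t)
    rw [hez t] at hγ
    have E := master f γ _ hγ 0 0
    simp only [Fin.cons_zero] at E
    have hS1 : (∑ k, (if k = t then (1:ℂ) else 0) * f k.succ 0) = 0 := by
      rw [hecollapse]
      rw [hsymm.apply 0 t.succ]
      exact hB t
    have hS2 : (∑ k, f 0 k.succ * (if k = t then (1:ℂ) else 0)) = 0 := by
      rw [Finset.sum_congr rfl fun k _ => mul_comm _ _, hecollapse]
      exact hB t
    have hT : (∑ k, ∑ l, (if k = t then (1:ℂ) else 0) * f k.succ l.succ *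
        (if l = t then (1:ℂ) else 0)) = 0 := by
      apply Finset.sum_eq_zero; intro k _
      apply Finset.sum_eq_zero; intro l _
      rw [hF k l]; ring
    rw [hS1, hS2, hT] at E
    simpa using E
  -- conclude
  ext i j
  simp only [Matrix.zero_apply]
  refine Fin.cases ?_ ?_ i
  · refine Fin.cases ?_ ?_ j
    · exact h00
    · exact fun b => hB b
  · intro a
    refine Fin.cases ?_ ?_ j
    · rw [hsymm.apply 0 a.succ]; exact hB a
    · exact fun b => hF a b


private lemma toSphere_open_pos {m : ℕ} (hm : 1 ≤ m)
    {U : Set (Metric.sphere (0 : EuclideanSpace ℝ (Fin m)) 1)}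
    (hU : IsOpen U) (hne : U.Nonempty) :
    0 < (volume : Measure (EuclideanSpace ℝ (Fin m))).toSphere U := by
  obtain ⟨V, hV, hUV⟩ := isOpen_induced_iff.mp hU
  rw [Measure.toSphere_apply' _ hU.measurableSet]
  set T : Set (EuclideanSpace ℝ (Fin m)) := Ioo (0:ℝ) 1 • (Subtype.val '' U) with hTdef
  have hT : T = (Metric.ball (0:EuclideanSpace ℝ (Fin m)) 1 \ {0}) ∩
      (fun x : EuclideanSpace ℝ (Fin m) => ‖x‖⁻¹ • x) ⁻¹' V := by
    ext x
    constructor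
    · rintro ⟨r, hr, s, hs, rfl⟩
      obtain ⟨u, hu, rfl⟩ := hs
      have hnu : ‖(u : EuclideanSpace ℝ (Fin m))‖ = 1 := by
        simpa using mem_sphere_zero_iff_norm.mp u.2
      have hxnorm : ‖r • (u : EuclideanSpace ℝ (Fin m))‖ = r := by
        rw [norm_smul, hnu, Real.norm_eq_abs, abs_of_pos hr.1, mul_one]
      refine ⟨⟨?_, ?_⟩, ?_⟩
      · rw [mem_ball_zero_iff, hxnorm]; exact hr.2
      · simp only [mem_singleton_iff]
        intro h0
        rw [h0, norm_zero] at hxnorm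
        exact absurd hxnorm.symm (ne_of_gt hr.1)
      · show ‖r • (u : EuclideanSpace ℝ (Fin m))‖⁻¹ • r • (u : EuclideanSpace ℝ (Fin m)) ∈ V
        rw [hxnorm, smul_smul, inv_mul_cancel₀ (ne_of_gt hr.1), one_smul]
        rw [← hUV] at hu
        exact hu
    · rintro ⟨⟨hball, hx0⟩, hVx⟩
      have hx0' : x ≠ 0 := by simpa using hx0
      have hnx : 0 < ‖x‖ := norm_pos_iff.mpr hx0'
      have hs1 : ‖(‖x‖⁻¹ • x : EuclideanSpace ℝ (Fin m))‖ = 1 := by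
        rw [norm_smul, Real.norm_eq_abs, abs_of_pos (inv_pos.mpr hnx),
          inv_mul_cancel₀ (ne_of_gt hnx)]
      refine ⟨‖x‖, ⟨hnx, mem_ball_zero_iff.mp hball⟩, ‖x‖⁻¹ • x, ?_, ?_⟩
      · refine ⟨⟨‖x‖⁻¹ • x, mem_sphere_zero_iff_norm.mpr hs1⟩, ?_, rfl⟩
        rw [← hUV]
        exact hVx
      · show ‖x‖ • ‖x‖⁻¹ • x = x
        rw [smul_smul, mul_inv_cancel₀ (ne_of_gt hnx), one_smul]
  have hTopen : IsOpen T := by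
    rw [hT]
    refine ContinuousOn.isOpen_inter_preimage ?_ (isOpen_ball.sdiff isClosed_singleton) hV
    refine ContinuousOn.smul (f := fun x : EuclideanSpace ℝ (Fin m) => ‖x‖⁻¹) ?_ continuousOn_id
    exact ContinuousOn.inv₀ continuous_norm.continuousOn
      fun x hx => norm_ne_zero_iff.mpr (by simpa using hx.2)
  have hTne : T.Nonempty := by
    obtain ⟨u, hu⟩ := hne
    exact ⟨(2⁻¹ : ℝ) • (u : EuclideanSpace ℝ (Fin m)), 2⁻¹, ⟨by norm_num, by norm_num⟩,
      (u : EuclideanSpace ℝ (Fin m)), ⟨u, hu, rfl⟩, rfl⟩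
  have hpos : 0 < volume T := hTopen.measure_pos volume hTne
  have hdim : ((Module.finrank ℝ (EuclideanSpace ℝ (Fin m)) : ℕ) : ℝ≥0∞) ≠ 0 := by
    rw [finrank_euclideanSpace_fin]
    exact Nat.cast_ne_zero.mpr (by omega)
  rw [pos_iff_ne_zero]
  exact mul_ne_zero hdim (ne_of_gt hpos)

set_option maxHeartbeats 2000000 in
/-- **Ellipticity at base infinity for the transverse ray transform of 2-tensors.**
With `n = m + 1 ≥ 3`, for `ξ ∈ ℝ`, `η ∈ ℝ^m`, and a continuous strictly positive weight
`ρ` on the unit sphere, the quadratic form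
`f ↦ ∫_{S^{m−1}} ρ(Y) ‖P(Y) f P(Y)ᵀ‖²_F dσ(Y)` is strictly positive on nonzero complex
symmetric `n × n` matrices, where `P(Y) = Id − w(Y) v(Y)ᵀ`, `w(Y) = (−c(Y), Y)`,
`v(Y) = (0, Y)`, `c(Y) = (ξ − i)⟨Y, η⟩/(ξ² + 1)`, and `σ` is the surface measure. -/
theorem transverse_base_infinity_elliptic
    (m : ℕ) (hm : 2 ≤ m) (ξ : ℝ) (η : EuclideanSpace ℝ (Fin m))
    (ρ : Metric.sphere (0 : EuclideanSpace ℝ (Fin m)) 1 → ℝ)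
    (hρcont : Continuous ρ) (hρpos : ∀ Y, 0 < ρ Y)
    (f : Matrix (Fin (m + 1)) (Fin (m + 1)) ℂ) (hsymm : f.IsSymm) (hf : f ≠ 0) :
    0 < ∫ Y : Metric.sphere (0 : EuclideanSpace ℝ (Fin m)) 1,
        (let c : ℂ := ((ξ : ℂ) - Complex.I) *
            ((⟪(Y : EuclideanSpace ℝ (Fin m)), η⟫ : ℝ) : ℂ) / (((ξ ^ 2 + 1 : ℝ) : ℂ))
         let w : Fin (m + 1) → ℂ := Fin.cons (-c)
            (fun i => (((Y : EuclideanSpace ℝ (Fin m)) i : ℝ) : ℂ))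
         let v : Fin (m + 1) → ℂ := Fin.cons 0
            (fun i => (((Y : EuclideanSpace ℝ (Fin m)) i : ℝ) : ℂ))
         let P : Matrix (Fin (m + 1)) (Fin (m + 1)) ℂ := 1 - Matrix.vecMulVec w v
         ρ Y * ∑ i, ∑ j, ‖(P * f * Pᵀ) i j‖ ^ 2)
      ∂((volume : Measure (EuclideanSpace ℝ (Fin m))).toSphere) := by
  classical
  let C : Metric.sphere (0 : EuclideanSpace ℝ (Fin m)) 1 → ℂ := fun Y =>
    ((ξ : ℂ) - Complex.I) * ((⟪(Y : EuclideanSpace ℝ (Fin m)), η⟫ : ℝ) : ℂ) /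
      (((ξ ^ 2 + 1 : ℝ) : ℂ))
  let zc : Metric.sphere (0 : EuclideanSpace ℝ (Fin m)) 1 → Fin m → ℂ := fun Y i =>
    (((Y : EuclideanSpace ℝ (Fin m)) i : ℝ) : ℂ)
  let M : Metric.sphere (0 : EuclideanSpace ℝ (Fin m)) 1 →
      Matrix (Fin (m+1)) (Fin (m+1)) ℂ := fun Y =>
    (1 - Matrix.vecMulVec (Fin.cons (-(C Y)) (zc Y)) (Fin.cons 0 (zc Y))) * f *
    (1 - Matrix.vecMulVec (Fin.cons (-(C Y)) (zc Y)) (Fin.cons 0 (zc Y)))ᵀ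
  let g : Metric.sphere (0 : EuclideanSpace ℝ (Fin m)) 1 → ℝ := fun Y =>
    ρ Y * ∑ i, ∑ j, ‖M Y i j‖ ^ 2
  show 0 < ∫ Y, g Y ∂((volume : Measure (EuclideanSpace ℝ (Fin m))).toSphere)
  have hzc : Continuous zc := by
    apply continuous_pi
    intro i
    exact Complex.continuous_ofReal.comp
      ((EuclideanSpace.proj i).continuous.comp continuous_subtype_val)
  have hC : Continuous C := by
    apply Continuous.div_const
    apply Continuous.mul continuous_const
    exact Complex.continuous_ofReal.comp
      (Continuous.inner continuous_subtype_val continuous_const)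
  have hW : Continuous (fun Y => (Fin.cons (-(C Y)) (zc Y) : Fin (m+1) → ℂ)) := by
    apply continuous_pi
    intro i
    refine Fin.cases ?_ ?_ i
    · simp only [Fin.cons_zero]
      exact hC.neg
    · intro k
      simp only [Fin.cons_succ]
      exact (continuous_apply k).comp hzc
  have hV : Continuous (fun Y => (Fin.cons (0:ℂ) (zc Y) : Fin (m+1) → ℂ)) := by
    apply continuous_pi
    intro i
    refine Fin.cases ?_ ?_ i
    · simp only [Fin.cons_zero]
      exact continuous_const
    · intro k
      simp only [Fin.cons_succ]
      exact (continuous_apply k).comp hzc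
  have hM : Continuous M :=
    ((continuous_const.sub (hW.matrix_vecMulVec hV)).matrix_mul continuous_const).matrix_mul
      ((continuous_const.sub (hW.matrix_vecMulVec hV)).matrix_transpose)
  have hg : Continuous g := by
    apply hρcont.mul
    apply continuous_finset_sum; intro i _
    apply continuous_finset_sum; intro j _
    exact (hM.matrix_elem i j).norm.pow 2
  have hgnn : ∀ Y, 0 ≤ g Y := fun Y =>
    mul_nonneg (hρpos Y).le (Finset.sum_nonneg fun i _ => Finset.sum_nonneg fun j _ =>
      pow_nonneg (norm_nonneg _) 2)
  have hex : ∃ Y, M Y ≠ 0 := by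
    by_contra hcon
    push_neg at hcon
    apply hf
    apply key_inj m hm f hsymm
    intro y hy
    have hynorm : ‖((WithLp.equiv 2 (Fin m → ℝ)).symm y : EuclideanSpace ℝ (Fin m))‖ = 1 := by
      rw [EuclideanSpace.norm_eq]
      show √(∑ x, ‖y x‖ ^ 2) = 1
      have hn : ∀ i : Fin m, ‖y i‖^2 = (y i)^2 := fun i => by rw [Real.norm_eq_abs, sq_abs]
      rw [Finset.sum_congr rfl fun i _ => hn i, hy, Real.sqrt_one]
    exact ⟨C ⟨(WithLp.equiv 2 (Fin m → ℝ)).symm y, mem_sphere_zero_iff_norm.mpr hynorm⟩,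
      hcon ⟨(WithLp.equiv 2 (Fin m → ℝ)).symm y, mem_sphere_zero_iff_norm.mpr hynorm⟩⟩
  obtain ⟨Y₀, hY₀⟩ := hex
  have hgpos : 0 < g Y₀ := by
    have hentry : ∃ i j, M Y₀ i j ≠ 0 := by
      by_contra hcc
      push_neg at hcc
      exact hY₀ (by ext i j; simpa using hcc i j)
    obtain ⟨i0, j0, hij⟩ := hentry
    apply mul_pos (hρpos Y₀)
    calc (0:ℝ) < ‖M Y₀ i0 j0‖^2 := pow_pos (norm_pos_iff.mpr hij) 2
    _ ≤ ∑ j, ‖M Y₀ i0 j‖^2 :=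
        Finset.single_le_sum (fun j _ => pow_nonneg (norm_nonneg _) 2) (Finset.mem_univ j0)
    _ ≤ ∑ i, ∑ j, ‖M Y₀ i j‖^2 :=
        Finset.single_le_sum (fun i _ => Finset.sum_nonneg fun j _ =>
          pow_nonneg (norm_nonneg _) 2) (Finset.mem_univ i0)
  have hgint : Integrable g ((volume : Measure (EuclideanSpace ℝ (Fin m))).toSphere) := by
    have h1 := hg.continuousOn.integrableOn_compact
      (μ := (volume : Measure (EuclideanSpace ℝ (Fin m))).toSphere) isCompact_univ
    rwa [integrableOn_univ] at h1
  rw [integral_pos_iff_support_of_nonneg hgnn hgint]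
  have hUopen : IsOpen (g ⁻¹' Set.Ioi 0) := hg.isOpen_preimage _ isOpen_Ioi
  have hUne : (g ⁻¹' Set.Ioi 0).Nonempty := ⟨Y₀, hgpos⟩
  refine lt_of_lt_of_le (toSphere_open_pos (by omega) hUopen hUne) (measure_mono ?_)
  intro x hx
  exact ne_of_gt hx
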